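/- Let ε ≥ 0, c > 0, a > 0, let v : ℝ → ℝ be twice continuously differentiable with v(z) > 0 for all z, and define u(z) := v(z) e^{c z / a}. Then for every z ∈ ℝ, ε u″(z) + c u′(z) − e^{−c z} u(z)^{a+1} = e^{c z / a} ( ε v″(z) + s v′(z) + η v(z) − v(z)^{a+1} ), where s = c(1 + 2ε/a) and η = c²(ε + a)/a². In particular, u solves the travelling-wave equation ε u″ + c u′ − e^{−c z} u^{a+1} = 0 (the first Keller–Segel travelling-wave equation with w = e^{−c z} u^β eliminated and a = β + m − 1) if and only if v solves the Fisher-type equation ε v″ + s v′ + η v − v^{a+1} = 0. -/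

import Mathlib

open Real Filter

theorem stmt_12 (ε c a : ℝ) (hε : 0 ≤ ε) (hc : 0 < c) (ha : 0 < a)
    (v : ℝ → ℝ) (hv : ContDiff ℝ 2 v) (hvpos : ∀ z : ℝ, 0 < v z)
    (u : ℝ → ℝ) (hu : ∀ z : ℝ, u z = v z * Real.exp (c * z / a))
    (s η : ℝ) (hs : s = c * (1 + 2 * ε / a)) (hη : η = c ^ 2 * (ε + a) / a ^ 2) :
    (∀ z : ℝ,
      ε * deriv (deriv u) z + c * deriv u z - Real.exp (-c * z) * u z ^ (a + 1)
        = Real.exp (c * z / a) *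
            (ε * deriv (deriv v) z + s * deriv v z + η * v z - v z ^ (a + 1))) ∧
    ((∀ z : ℝ, ε * deriv (deriv u) z + c * deriv u z
        - Real.exp (-c * z) * u z ^ (a + 1) = 0) ↔
     (∀ z : ℝ, ε * deriv (deriv v) z + s * deriv v z + η * v z - v z ^ (a + 1) = 0)) := by
  have ha' : a ≠ 0 := ne_of_gt ha
  have hufun : u = fun z => v z * Real.exp (c * z / a) := funext hu
  -- differentiability facts
  have hv1 : Differentiable ℝ v := hv.differentiable (by norm_num)
  have hv2 : ContDiff ℝ 1 (deriv v) := by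
    have h := (contDiff_succ_iff_deriv (n := 1)).mp (by exact_mod_cast hv)
    exact h.2.2
  have hv2' : Differentiable ℝ (deriv v) := hv2.differentiable (by norm_num)
  have hE : ∀ z : ℝ, HasDerivAt (fun z => Real.exp (c * z / a))
      (c / a * Real.exp (c * z / a)) z := by
    intro z
    have h1 : HasDerivAt (fun z : ℝ => c * z / a) (c / a) z := by
      simpa [mul_comm, mul_div_assoc] using
        (((hasDerivAt_id z).const_mul c).div_const a)
    simpa [mul_comm] using h1.exp
  -- first derivative of u
  have hdu : deriv u = fun z =>
      (deriv v z + c / a * v z) * Real.exp (c * z / a) := by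
    funext z
    rw [hufun]
    have := ((hv1 z).hasDerivAt.mul (hE z)).deriv
    exact this.trans (by ring)
  -- second derivative of u
  have hddu : ∀ z : ℝ, deriv (deriv u) z =
      (deriv (deriv v) z + 2 * (c / a) * deriv v z + (c / a) ^ 2 * v z) *
        Real.exp (c * z / a) := by
    intro z
    rw [hdu]
    have h1 : HasDerivAt (fun z => deriv v z + c / a * v z)
        (deriv (deriv v) z + c / a * deriv v z) z :=
      (hv2' z).hasDerivAt.add (((hv1 z).hasDerivAt).const_mul (c / a))
    have := (h1.mul (hE z)).deriv
    exact this.trans (by ring)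
  -- rpow identity
  have hr : ∀ z : ℝ, Real.exp (-c * z) * (u z) ^ (a + 1)
      = Real.exp (c * z / a) * (v z) ^ (a + 1) := by
    intro z
    rw [hu z, Real.mul_rpow (le_of_lt (hvpos z)) (Real.exp_nonneg _),
      ← Real.exp_mul]
    have h2 : Real.exp (-c * z) * Real.exp (c * z / a * (a + 1))
        = Real.exp (c * z / a) := by
      rw [← Real.exp_add]; congr 1; field_simp; ring
    rw [mul_comm (v z ^ (a + 1)), ← mul_assoc, h2, mul_comm]
  -- main identity
  have key : ∀ z : ℝ,
      ε * deriv (deriv u) z + c * deriv u z - Real.exp (-c * z) * u z ^ (a + 1)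
        = Real.exp (c * z / a) *
            (ε * deriv (deriv v) z + s * deriv v z + η * v z - v z ^ (a + 1)) := by
    intro z
    rw [hddu z, hdu, hr z, hs, hη]
    field_simp
    ring
  refine ⟨key, ?_⟩
  constructor
  · intro h z
    have := (h z) ▸ (key z).symm
    have he : Real.exp (c * z / a) ≠ 0 := Real.exp_ne_zero _
    exact (mul_eq_zero.mp this).resolve_left he
  · intro h z
    rw [key z, h z, mul_zero]
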